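/- Let f, g be nonconstant (ρ,σ)-homogeneous polynomials in K[X,Y] of degrees v and u respectively, where (ρ,σ) ∈ ℤ² \ {(0,0)}. Then v, u are integers, and {f,g} = 0 if and only if f^u = λ g^v for some nonzero λ ∈ K. -/

import Mathlib

open MvPolynomial

/-- The Poisson product on `K[X,Y]`: `{f,g} = f_X g_Y - f_Y g_X`. -/
noncomputable def poissonBracket {K : Type*} [CommRing K]
    (f g : MvPolynomial (Fin 2) K) : MvPolynomial (Fin 2) K :=
  pderiv 0 f * pderiv 1 g - pderiv 1 f * pderiv 0 g

/-- `f` is `(ρ,σ)`-homogeneous of (integer) degree `τ` for `(ρ,σ) ∈ ℤ²`: every monomial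
`X^i Y^j` occurring in `f` satisfies `ρ i + σ j = τ`. -/
def IsZHomogeneous {K : Type*} [CommRing K] (ρ σ : ℤ) (τ : ℤ)
    (f : MvPolynomial (Fin 2) K) : Prop :=
  ∀ m ∈ f.support, ρ * (m 0 : ℤ) + σ * (m 1 : ℤ) = τ

section Aux
variable {K : Type*} [Field K]


lemma coeff_pderiv' (i : Fin 2) (p : MvPolynomial (Fin 2) K) (m : Fin 2 →₀ ℕ) :
    coeff m (pderiv i p) = ((m i : K) + 1) * coeff (m + Finsupp.single i 1) p := by
  induction p using MvPolynomial.induction_on' with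
  | monomial s a =>
    classical
    rw [pderiv_monomial, coeff_monomial, coeff_monomial]
    by_cases hs : s = m + Finsupp.single i 1
    · subst hs
      rw [if_pos (by simp), if_pos rfl]
      push_cast [Finsupp.add_apply, Finsupp.single_eq_same]
      ring
    · rw [if_neg hs]
      by_cases hd : s - Finsupp.single i 1 = m
      · by_cases hsi : s i = 0
        · rw [if_pos hd]; simp [hsi]
        · exfalso
          apply hs
          rw [← hd, tsub_add_cancel_of_le]
          rwa [Finsupp.single_le_iff, Nat.one_le_iff_ne_zero]
      · rw [if_neg hd, mul_zero]
  | add p q hp hq =>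
    simp [map_add, coeff_add, hp, hq, mul_add]

lemma eq_C_of_pderiv_eq_zero [CharZero K] (p : MvPolynomial (Fin 2) K)
    (h : ∀ i, pderiv i p = 0) : p = C (coeff 0 p) := by
  ext m
  rcases eq_or_ne m 0 with rfl | hm
  · simp
  · have : ∃ i, m i ≠ 0 := by
      by_contra hc
      push_neg at hc
      exact hm (Finsupp.ext fun i => hc i)
    obtain ⟨i, hi⟩ := this
    have h2 := coeff_pderiv' i p (m - Finsupp.single i 1)
    rw [h i, coeff_zero] at h2
    have hle : Finsupp.single i 1 ≤ m := by
      rwa [Finsupp.single_le_iff, Nat.one_le_iff_ne_zero]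
    rw [tsub_add_cancel_of_le hle] at h2
    have hne : (((m - Finsupp.single i 1 : Fin 2 →₀ ℕ)) i : K) + 1 ≠ 0 := by
      have : ((((m - Finsupp.single i 1 : Fin 2 →₀ ℕ)) i + 1 : ℕ) : K) ≠ 0 := Nat.cast_ne_zero.mpr (by omega)
      push_cast at this; exact this
    have : coeff m p = 0 := by
      rcases mul_eq_zero.mp h2.symm with h' | h'
      · exact absurd h' hne
      · exact h'
    rw [this, coeff_C, if_neg (Ne.symm hm)]

lemma coeff_X_mul_pderiv (i : Fin 2) (p : MvPolynomial (Fin 2) K) (m : Fin 2 →₀ ℕ) :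
    coeff m (X i * pderiv i p) = (m i : K) * coeff m p := by
  classical
  rw [coeff_X_mul']
  by_cases hmi : i ∈ m.support
  · rw [if_pos hmi, coeff_pderiv']
    have hi : m i ≠ 0 := Finsupp.mem_support_iff.mp hmi
    have hle : Finsupp.single i 1 ≤ m := by
      rwa [Finsupp.single_le_iff, Nat.one_le_iff_ne_zero]
    rw [tsub_add_cancel_of_le hle]
    have happ : ((m - Finsupp.single i 1 : Fin 2 →₀ ℕ)) i = m i - 1 := by
      rw [Finsupp.tsub_apply, Finsupp.single_eq_same]
    rw [happ]
    have : (m i - 1) + 1 = m i := by omega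
    congr 1
    rw [← this]; push_cast; ring
  · rw [if_neg hmi]
    have : m i = 0 := Finsupp.notMem_support_iff.mp hmi
    simp [this]

lemma ZHom.euler {ρ σ τ : ℤ} {h : MvPolynomial (Fin 2) K}
    (hh : ∀ m ∈ h.support, ρ * (m 0 : ℤ) + σ * (m 1 : ℤ) = τ) :
    C (ρ : K) * (X 0 * pderiv 0 h) + C (σ : K) * (X 1 * pderiv 1 h) = C (τ : K) * h := by
  ext m
  rw [coeff_add, coeff_C_mul, coeff_C_mul, coeff_C_mul, coeff_X_mul_pderiv, coeff_X_mul_pderiv]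
  by_cases hc : coeff m h = 0
  · rw [hc]; ring
  · have := hh m (mem_support_iff.mpr hc)
    have hcast : (ρ : K) * (m 0 : K) + (σ : K) * (m 1 : K) = (τ : K) := by
      exact_mod_cast congrArg (Int.cast : ℤ → K) this
    linear_combination coeff m h * hcast

lemma mem_support_pderiv_succ {i : Fin 2} {p : MvPolynomial (Fin 2) K} {m : Fin 2 →₀ ℕ}
    (hm : m ∈ (pderiv i p).support) : m + Finsupp.single i 1 ∈ p.support := by
  rw [mem_support_iff] at hm ⊢
  intro hc
  rw [coeff_pderiv', hc, mul_zero] at hm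
  exact hm rfl

lemma degreeOf_pderiv_lt {i : Fin 2} {p : MvPolynomial (Fin 2) K}
    (h : pderiv i p ≠ 0) : degreeOf i (pderiv i p) < degreeOf i p := by
  have key : ∀ m ∈ (pderiv i p).support, m i + 1 ≤ degreeOf i p := by
    intro m hm
    have h2 := mem_support_pderiv_succ hm
    have := Finset.le_sup (f := fun m : Fin 2 →₀ ℕ => m i) h2
    rw [← degreeOf_eq_sup] at this
    simpa using this
  obtain ⟨m, hm⟩ := (support_nonempty.mpr h)
  have hpos : 0 < degreeOf i p := lt_of_lt_of_le (Nat.succ_pos _) (key m hm)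
  rw [degreeOf_lt_iff hpos]
  intro b hb
  exact lt_of_lt_of_le (Nat.lt_succ_self _) (key b hb)

lemma degreeOf_le_of_dvd_aux {p q : MvPolynomial (Fin 2) K} (h : p ∣ q) (hq : q ≠ 0) :
    degreeOf 0 p ≤ degreeOf 0 q := by
  have e := MvPolynomial.finSuccEquiv K 1
  rw [← natDegree_finSuccEquiv p, ← natDegree_finSuccEquiv q]
  apply Polynomial.natDegree_le_of_dvd
  · exact map_dvd (MvPolynomial.finSuccEquiv K 1).toAlgHom h
  · simpa using hq

lemma degreeOf_le_of_dvd {p q : MvPolynomial (Fin 2) K} (i : Fin 2) (h : p ∣ q) (hq : q ≠ 0) :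
    degreeOf i p ≤ degreeOf i q := by
  fin_cases i
  · exact degreeOf_le_of_dvd_aux h hq
  case _ =>
   show degreeOf 1 p ≤ degreeOf 1 q
   set s : Fin 2 ≃ Fin 2 := Equiv.swap 0 1 with hs
   have hinj : Function.Injective (s : Fin 2 → Fin 2) := s.injective
   have h1 : ∀ r : MvPolynomial (Fin 2) K, degreeOf (1 : Fin 2) r = degreeOf 0 (rename s r) := by
     intro r
     have := degreeOf_rename_of_injective (p := r) hinj 1
     rw [this.symm]
     congr 1
   rw [h1 p, h1 q]
   exact degreeOf_le_of_dvd_aux (map_dvd (rename (R := K) (s : Fin 2 → Fin 2)) h)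
     (fun hc => hq (rename_injective (s : Fin 2 → Fin 2) hinj (by rw [hc, map_zero])))

lemma pderiv_eq_zero_of_self_dvd {i : Fin 2} {p : MvPolynomial (Fin 2) K}
    (hd : p ∣ pderiv i p) : pderiv i p = 0 := by
  by_contra h
  exact absurd (degreeOf_le_of_dvd i hd h) (not_le.mpr (degreeOf_pderiv_lt h))

lemma exists_const_ratio [CharZero K] {p q : MvPolynomial (Fin 2) K} (hp : p ≠ 0) (hq : q ≠ 0)
    (h : ∀ i, pderiv i p * q = p * pderiv i q) : ∃ c : K, c ≠ 0 ∧ p = C c * q := by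
  obtain ⟨p₁, q₁, d, hrel, hp₁, hq₁⟩ := UniqueFactorizationMonoid.exists_reduced_factors p hp q
  have hd0 : d ≠ 0 := fun hc => hp (by rw [← hp₁, hc, zero_mul])
  have hp10 : p₁ ≠ 0 := fun hc => hp (by rw [← hp₁, hc, mul_zero])
  have hq10 : q₁ ≠ 0 := fun hc => hq (by rw [← hq₁, hc, mul_zero])
  have h1 : ∀ i : Fin 2, pderiv i p₁ * q₁ = p₁ * pderiv i q₁ := by
    intro i
    have h2 := h i
    rw [← hp₁, ← hq₁, pderiv_mul, pderiv_mul] at h2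
    have h3 : d * (d * (pderiv i p₁ * q₁)) = d * (d * (p₁ * pderiv i q₁)) := by
      linear_combination h2
    exact mul_left_cancel₀ hd0 (mul_left_cancel₀ hd0 h3)
  have hdp : ∀ i : Fin 2, pderiv i p₁ = 0 := fun i =>
    pderiv_eq_zero_of_self_dvd (hrel.dvd_of_dvd_mul_right ⟨pderiv i q₁, (h1 i).symm ▸ (h1 i)⟩)
  have hdq : ∀ i : Fin 2, pderiv i q₁ = 0 := fun i =>
    pderiv_eq_zero_of_self_dvd ((hrel.symm).dvd_of_dvd_mul_left ⟨pderiv i p₁, by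
      rw [← h1 i]; ring⟩)
  have hp1C : p₁ = C (coeff 0 p₁) := eq_C_of_pderiv_eq_zero p₁ hdp
  have hq1C : q₁ = C (coeff 0 q₁) := eq_C_of_pderiv_eq_zero q₁ hdq
  set c₁ := coeff 0 p₁
  set c₂ := coeff 0 q₁
  have hc₁ : c₁ ≠ 0 := fun hc => hp10 (by rw [hp1C, hc, map_zero])
  have hc₂ : c₂ ≠ 0 := fun hc => hq10 (by rw [hq1C, hc, map_zero])
  refine ⟨c₁ / c₂, div_ne_zero hc₁ hc₂, ?_⟩
  rw [← hp₁, ← hq₁, hp1C, hq1C]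
  rw [show (C (c₁ / c₂) : MvPolynomial (Fin 2) K) * (d * C c₂) = d * C (c₁ / c₂ * c₂) by
    rw [map_mul]; ring]
  rw [div_mul_cancel₀ _ hc₂]

lemma mul_pderiv_pow (x : MvPolynomial (Fin 2) K) (n : ℕ) (i : Fin 2) :
    x * pderiv i (x ^ n) = C (n : K) * (x ^ n * pderiv i x) := by
  cases n with
  | zero => simp
  | succ k =>
    rw [pderiv_pow, show ((k + 1 : ℕ) : MvPolynomial (Fin 2) K) = C ((k + 1 : ℕ) : K) from
      (map_natCast C _).symm, Nat.succ_sub_one]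
    ring

lemma key_identity (f g : MvPolynomial (Fin 2) K) (a a' b b' : ℕ) (i : Fin 2) :
    f * g * (pderiv i (f ^ a * g ^ b') * (f ^ a' * g ^ b)
      - (f ^ a * g ^ b') * pderiv i (f ^ a' * g ^ b))
    = f ^ (a + a') * g ^ (b + b') *
        (C ((a : K) - (a' : K)) * (g * pderiv i f) - C ((b : K) - (b' : K)) * (f * pderiv i g)) := by
  have h1 := mul_pderiv_pow f a i
  have h2 := mul_pderiv_pow g b' i
  have h3 := mul_pderiv_pow f a' i
  have h4 := mul_pderiv_pow g b i
  rw [pderiv_mul, pderiv_mul]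
  simp only [map_sub]
  linear_combination (f ^ a' * g ^ b * g ^ b' * g) * h1 + (f ^ a * f ^ a' * f * g ^ b) * h2
    - (f ^ a * g ^ b * g ^ b' * g) * h3 - (f ^ a * f ^ a' * f * g ^ b') * h4


theorem poissonBracket_eq_zero_iff_power_relation' {K : Type*} [Field K] [CharZero K]
    (ρ σ v u : ℤ) (hρσ : (ρ, σ) ≠ (0, 0))
    (f g : MvPolynomial (Fin 2) K)
    (hfc : ∀ c : K, f ≠ C c) (hgc : ∀ c : K, g ≠ C c)
    (hf : ∀ m ∈ f.support, ρ * (m 0 : ℤ) + σ * (m 1 : ℤ) = v)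
    (hg : ∀ m ∈ g.support, ρ * (m 0 : ℤ) + σ * (m 1 : ℤ) = u) :
    pderiv 0 f * pderiv 1 g - pderiv 1 f * pderiv 0 g = 0 ↔
      ∃ lam : K, lam ≠ 0 ∧
        (algebraMap (MvPolynomial (Fin 2) K) (FractionRing (MvPolynomial (Fin 2) K)) f) ^ u =
          algebraMap (MvPolynomial (Fin 2) K) (FractionRing (MvPolynomial (Fin 2) K)) (C lam) *
            (algebraMap (MvPolynomial (Fin 2) K) (FractionRing (MvPolynomial (Fin 2) K)) g) ^ v := by
  set φ := algebraMap (MvPolynomial (Fin 2) K) (FractionRing (MvPolynomial (Fin 2) K)) with hφ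
  have hφinj : Function.Injective φ :=
    IsFractionRing.injective (MvPolynomial (Fin 2) K) (FractionRing (MvPolynomial (Fin 2) K))
  have hf0 : f ≠ 0 := fun h => hfc 0 (by rw [h, map_zero])
  have hg0 : g ≠ 0 := fun h => hgc 0 (by rw [h, map_zero])
  have Ef := ZHom.euler hf
  have Eg := ZHom.euler hg
  set a := u.toNat with ha
  set a' := (-u).toNat with ha'
  set b := v.toNat with hb
  set b' := (-v).toNat with hb'
  have hau : (a : ℤ) - (a' : ℤ) = u := by omega
  have hbv : (b : ℤ) - (b' : ℤ) = v := by omega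
  have hca : ((a : K) - (a' : K)) = (u : K) := by exact_mod_cast congrArg (Int.cast : ℤ → K) hau
  have hcb : ((b : K) - (b' : K)) = (v : K) := by exact_mod_cast congrArg (Int.cast : ℤ → K) hbv
  have keyid : ∀ i : Fin 2, f * g * (pderiv i (f ^ a * g ^ b') * (f ^ a' * g ^ b)
        - (f ^ a * g ^ b') * pderiv i (f ^ a' * g ^ b))
      = f ^ (a + a') * g ^ (b + b') *
        (C (u : K) * (g * pderiv i f) - C (v : K) * (f * pderiv i g)) := by
    intro i
    rw [← hca, ← hcb]
    exact key_identity f g a a' b b' i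
  have hfg0 : f * g ≠ 0 := mul_ne_zero hf0 hg0
  have hP0 : f ^ a * g ^ b' ≠ 0 := mul_ne_zero (pow_ne_zero _ hf0) (pow_ne_zero _ hg0)
  have hQ0 : f ^ a' * g ^ b ≠ 0 := mul_ne_zero (pow_ne_zero _ hf0) (pow_ne_zero _ hg0)
  have hF0 : φ f ≠ 0 := fun h => hf0 (hφinj (by rw [h, map_zero]))
  have hG0 : φ g ≠ 0 := fun h => hg0 (hφinj (by rw [h, map_zero]))
  have e1 : φ f ^ (a : ℤ) = φ f ^ u * φ f ^ ((a' : ℕ) : ℤ) := by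
    rw [← zpow_add₀ hF0]; congr 1; omega
  have e2 : φ g ^ (b : ℤ) = φ g ^ v * φ g ^ ((b' : ℕ) : ℤ) := by
    rw [← zpow_add₀ hG0]; congr 1; omega
  constructor
  · intro hbr
    have rel0 : C (u : K) * (g * pderiv 0 f) - C (v : K) * (f * pderiv 0 g) = 0 := by
      linear_combination (-(pderiv 0 f)) * Eg + (pderiv 0 g) * Ef + (C (σ : K) * X 1) * hbr
    have rel1 : C (u : K) * (g * pderiv 1 f) - C (v : K) * (f * pderiv 1 g) = 0 := by
      linear_combination (-(pderiv 1 f)) * Eg + (pderiv 1 g) * Ef - (C (ρ : K) * X 0) * hbr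
    have hPQ : ∀ i : Fin 2, pderiv i (f ^ a * g ^ b') * (f ^ a' * g ^ b)
        = (f ^ a * g ^ b') * pderiv i (f ^ a' * g ^ b) := by
      intro i
      have h2 := keyid i
      have rels : C (u : K) * (g * pderiv i f) - C (v : K) * (f * pderiv i g) = 0 := by
        fin_cases i
        · exact rel0
        · exact rel1
      rw [rels, mul_zero] at h2
      have h3 := mul_left_cancel₀ hfg0 (h2.trans (mul_zero (f * g)).symm)
      exact sub_eq_zero.mp h3
    obtain ⟨c, hc0, hPc⟩ := exists_const_ratio hP0 hQ0 hPQ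
    refine ⟨c, hc0, ?_⟩
    have key' : φ f ^ a * φ g ^ b' = φ (C c) * (φ f ^ a' * φ g ^ b) := by
      have h4 := congrArg φ hPc
      simpa [map_mul, map_pow] using h4
    have goal' : φ f ^ (a : ℤ) * φ g ^ ((b' : ℕ) : ℤ)
        = φ (C c) * (φ f ^ ((a' : ℕ) : ℤ) * φ g ^ (b : ℤ)) := by
      rw [zpow_natCast, zpow_natCast, zpow_natCast, zpow_natCast]
      exact key'
    rw [e1, e2] at goal'
    apply mul_right_cancel₀
      (mul_ne_zero (zpow_ne_zero ((a' : ℕ) : ℤ) hF0) (zpow_ne_zero ((b' : ℕ) : ℤ) hG0))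
    linear_combination goal'
  · rintro ⟨c, hc0, hrel⟩
    have key' : φ f ^ (a : ℤ) * φ g ^ ((b' : ℕ) : ℤ)
        = φ (C c) * (φ f ^ ((a' : ℕ) : ℤ) * φ g ^ (b : ℤ)) := by
      rw [e1, e2, hrel]; ring
    rw [zpow_natCast, zpow_natCast, zpow_natCast, zpow_natCast] at key'
    have hPc : f ^ a * g ^ b' = C c * (f ^ a' * g ^ b) := by
      apply hφinj
      simpa [map_mul, map_pow] using key'
    have relc : ∀ i : Fin 2, C (u : K) * (g * pderiv i f) = C (v : K) * (f * pderiv i g) := by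
      intro i
      have h2 := keyid i
      have h3 : pderiv i (f ^ a * g ^ b') * (f ^ a' * g ^ b)
          - (f ^ a * g ^ b') * pderiv i (f ^ a' * g ^ b) = 0 := by
        have h4 : pderiv i (f ^ a * g ^ b') = C c * pderiv i (f ^ a' * g ^ b) := by
          rw [hPc, pderiv_C_mul]
        rw [h4, hPc]
        ring
      rw [h3, mul_zero] at h2
      have h5 : f ^ (a + a') * g ^ (b + b') ≠ 0 :=
        mul_ne_zero (pow_ne_zero _ hf0) (pow_ne_zero _ hg0)
      have h6 := (mul_eq_zero.mp h2.symm).resolve_left h5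
      exact sub_eq_zero.mp h6
    by_cases hu : u = 0
    · by_cases hv : v = 0
      · -- u = v = 0 : Euler alone forces the bracket to vanish
        have Ef0 : C (ρ : K) * (X 0 * pderiv 0 f) + C (σ : K) * (X 1 * pderiv 1 f) = 0 := by
          rw [Ef, hv]; simp
        have Eg0 : C (ρ : K) * (X 0 * pderiv 0 g) + C (σ : K) * (X 1 * pderiv 1 g) = 0 := by
          rw [Eg, hu]; simp
        by_cases hρ : ρ = 0
        · have hσ : σ ≠ 0 := fun hσ => hρσ (by rw [hρ, hσ])
          have hσK : (C (σ : K) : MvPolynomial (Fin 2) K) ≠ 0 := by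
            rw [Ne, C_eq_zero, Int.cast_eq_zero]; exact hσ
          have hf1 : pderiv 1 f = 0 := by
            have : C (σ : K) * (X 1 * pderiv 1 f) = 0 := by
              rw [hρ] at Ef0; simpa using Ef0
            rcases mul_eq_zero.mp this with h | h
            · exact absurd h hσK
            · rcases mul_eq_zero.mp h with h' | h'
              · exact absurd h' (X_ne_zero 1)
              · exact h'
          have hg1 : pderiv 1 g = 0 := by
            have : C (σ : K) * (X 1 * pderiv 1 g) = 0 := by
              rw [hρ] at Eg0; simpa using Eg0
            rcases mul_eq_zero.mp this with h | h
            · exact absurd h hσK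
            · rcases mul_eq_zero.mp h with h' | h'
              · exact absurd h' (X_ne_zero 1)
              · exact h'
          rw [hf1, hg1]; ring
        · by_cases hσ : σ = 0
          · have hρK : (C (ρ : K) : MvPolynomial (Fin 2) K) ≠ 0 := by
              rw [Ne, C_eq_zero, Int.cast_eq_zero]; exact hρ
            have hf1 : pderiv 0 f = 0 := by
              have : C (ρ : K) * (X 0 * pderiv 0 f) = 0 := by
                rw [hσ] at Ef0; simpa using Ef0
              rcases mul_eq_zero.mp this with h | h
              · exact absurd h hρK
              · rcases mul_eq_zero.mp h with h' | h'
                · exact absurd h' (X_ne_zero 0)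
                · exact h'
            have hg1 : pderiv 0 g = 0 := by
              have : C (ρ : K) * (X 0 * pderiv 0 g) = 0 := by
                rw [hσ] at Eg0; simpa using Eg0
              rcases mul_eq_zero.mp this with h | h
              · exact absurd h hρK
              · rcases mul_eq_zero.mp h with h' | h'
                · exact absurd h' (X_ne_zero 0)
                · exact h'
            rw [hf1, hg1]; ring
          · have hρK : (C (ρ : K) : MvPolynomial (Fin 2) K) ≠ 0 := by
              rw [Ne, C_eq_zero, Int.cast_eq_zero]; exact hρ
            have hσK : (C (σ : K) : MvPolynomial (Fin 2) K) ≠ 0 := by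
              rw [Ne, C_eq_zero, Int.cast_eq_zero]; exact hσ
            have hzero : (C (ρ : K) * X 0) * (C (σ : K) * X 1) *
                (pderiv 0 f * pderiv 1 g - pderiv 1 f * pderiv 0 g) = 0 := by
              linear_combination (C (σ : K) * X 1 * pderiv 1 g) * Ef0
                - (C (σ : K) * X 1 * pderiv 1 f) * Eg0
            have h7 : ((C (ρ : K) * X 0) * (C (σ : K) * X 1) : MvPolynomial (Fin 2) K) ≠ 0 :=
              mul_ne_zero (mul_ne_zero hρK (X_ne_zero 0)) (mul_ne_zero hσK (X_ne_zero 1))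
            exact (mul_eq_zero.mp hzero).resolve_left h7
      · -- u = 0, v ≠ 0 : then g would be constant, contradiction
        exfalso
        have hvK : (C (v : K) : MvPolynomial (Fin 2) K) ≠ 0 := by
          rw [Ne, C_eq_zero, Int.cast_eq_zero]; exact hv
        have hdg : ∀ i : Fin 2, pderiv i g = 0 := by
          intro i
          have h8 := relc i
          rw [hu] at h8
          simp only [Int.cast_zero, map_zero, zero_mul] at h8
          have h9 := (mul_eq_zero.mp h8.symm).resolve_left hvK
          exact (mul_eq_zero.mp h9).resolve_left hf0
        exact hgc _ (eq_C_of_pderiv_eq_zero g hdg)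
    · by_cases hv : v = 0
      · -- v = 0, u ≠ 0 : then f would be constant, contradiction
        exfalso
        have huK : (C (u : K) : MvPolynomial (Fin 2) K) ≠ 0 := by
          rw [Ne, C_eq_zero, Int.cast_eq_zero]; exact hu
        have hdf : ∀ i : Fin 2, pderiv i f = 0 := by
          intro i
          have h8 := relc i
          rw [hv] at h8
          simp only [Int.cast_zero, map_zero, zero_mul] at h8
          have h9 := (mul_eq_zero.mp h8).resolve_left huK
          exact (mul_eq_zero.mp h9).resolve_left hg0
        exact hfc _ (eq_C_of_pderiv_eq_zero f hdf)
      · have huK : (C (u : K) : MvPolynomial (Fin 2) K) ≠ 0 := by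
          rw [Ne, C_eq_zero, Int.cast_eq_zero]; exact hu
        have hvK : (C (v : K) : MvPolynomial (Fin 2) K) ≠ 0 := by
          rw [Ne, C_eq_zero, Int.cast_eq_zero]; exact hv
        have hzero : C (u : K) * C (v : K) * f * g *
            (pderiv 0 f * pderiv 1 g - pderiv 1 f * pderiv 0 g) = 0 := by
          linear_combination (C (v : K) * f * pderiv 1 g) * relc 0
            - (C (v : K) * f * pderiv 0 g) * relc 1
        have h7 : C (u : K) * C (v : K) * f * g ≠ 0 :=
          mul_ne_zero (mul_ne_zero (mul_ne_zero huK hvK) hf0) hg0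
        exact (mul_eq_zero.mp hzero).resolve_left h7

end Aux

/-- Let `f, g` be nonconstant `(ρ,σ)`-homogeneous polynomials of (necessarily integer)
degrees `v` and `u`, with `(ρ,σ) ∈ ℤ² \ {(0,0)}`. Then `{f,g} = 0` iff `f^u = λ g^v` for
some nonzero `λ ∈ K` (the powers with possibly negative integer exponents being taken in
the fraction field of `K[X,Y]`). -/
theorem poissonBracket_eq_zero_iff_power_relation {K : Type*} [Field K] [CharZero K]
    (ρ σ v u : ℤ) (hρσ : (ρ, σ) ≠ (0, 0))
    (f g : MvPolynomial (Fin 2) K)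
    (hfc : ∀ c : K, f ≠ C c) (hgc : ∀ c : K, g ≠ C c)
    (hf : IsZHomogeneous ρ σ v f) (hg : IsZHomogeneous ρ σ u g) :
    poissonBracket f g = 0 ↔
      ∃ lam : K, lam ≠ 0 ∧
        (algebraMap (MvPolynomial (Fin 2) K) (FractionRing (MvPolynomial (Fin 2) K)) f) ^ u =
          algebraMap (MvPolynomial (Fin 2) K) (FractionRing (MvPolynomial (Fin 2) K)) (C lam) *
            (algebraMap (MvPolynomial (Fin 2) K) (FractionRing (MvPolynomial (Fin 2) K)) g) ^ v := by
  exact poissonBracket_eq_zero_iff_power_relation' ρ σ v u hρσ f g hfc hgc hf hg
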